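/- If ũ satisfies H(ũ) = 0 and D_J^{p^{(0)}}(ũ, u^{(0)}) < +∞, then the Bregman iterates satisfy the convergence rate 0 ≤ H(u^{(k)}) ≤ D_J^{p^{(0)}}(ũ, u^{(0)}) / (λ k) for all k ≥ 1; in particular H(u^{(k)}) → 0. -/

import Mathlib

open RealInnerProductSpace

/-- The Bregman divergence `D_J^p(x, y) = J(x) - J(y) - ⟨p, x - y⟩`. -/
noncomputable def bregman {n : ℕ} (J : EuclideanSpace ℝ (Fin n) → ℝ)
    (p x y : EuclideanSpace ℝ (Fin n)) : ℝ :=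
  J x - J y - ⟪p, x - y⟫

/-- Gradient inequality for a convex differentiable function. -/
lemma convex_grad_ineq {n : ℕ} (H : EuclideanSpace ℝ (Fin n) → ℝ)
    (hH : ConvexOn ℝ Set.univ H) (hd : Differentiable ℝ H)
    (x y : EuclideanSpace ℝ (Fin n)) :
    ⟪gradient H y, x - y⟫ ≤ H x - H y := by
  have hgrad : HasGradientAt H (gradient H y) y := (hd y).hasGradientAt
  have hfd : HasFDerivAt H ((InnerProductSpace.toDual ℝ _) (gradient H y)) y :=
    hasGradientAt_iff_hasFDerivAt.mp hgrad
  set c : ℝ → EuclideanSpace ℝ (Fin n) := fun t => y + t • (x - y) with hc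
  have hcderiv : HasDerivAt c (x - y) 0 := by
    have h1 : HasDerivAt (fun t : ℝ => t • (x - y)) ((1 : ℝ) • (x - y)) 0 :=
      (hasDerivAt_id (0 : ℝ)).smul_const (x - y)
    simpa only [one_smul] using (h1.const_add y)
  have hfd' : HasFDerivAt H ((InnerProductSpace.toDual ℝ _) (gradient H y))
      (y + (0 : ℝ) • (x - y)) := by simpa using hfd
  have hcomp : HasDerivAt (fun t => H (c t))
      ((InnerProductSpace.toDual ℝ _) (gradient H y) (x - y)) 0 := by
    have := hfd'.comp_hasDerivAt (0 : ℝ) hcderiv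
    exact this
  have hgconv : ConvexOn ℝ Set.univ (fun t => H (c t)) := by
    have h1 : ConvexOn ℝ ((AffineMap.lineMap y x : ℝ →ᵃ[ℝ] _) ⁻¹' Set.univ)
        (H ∘ (AffineMap.lineMap y x : ℝ →ᵃ[ℝ] _)) :=
      hH.comp_affineMap _
    have h2 : (fun t => H (c t)) = H ∘ ⇑(AffineMap.lineMap y x : ℝ →ᵃ[ℝ] EuclideanSpace ℝ (Fin n)) := by
      funext t
      simp [hc, AffineMap.lineMap_apply, add_comm]
    rw [h2]
    simpa using h1
  have hslope := hgconv.le_slope_of_hasDerivAt (Set.mem_univ (0 : ℝ))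
    (Set.mem_univ (1 : ℝ)) zero_lt_one hcomp
  have hc0 : c 0 = y := by simp [hc]
  have hc1 : c 1 = x := by simp [hc]
  rw [InnerProductSpace.toDual_apply_apply] at hslope
  simpa [slope, hc0, hc1, real_inner_comm] using hslope

/-- If `H(ũ) = 0`, the Bregman iterates satisfy the convergence rate
`0 ≤ H(u k) ≤ D_J^{p 0}(ũ, u 0) / (λ k)` for all `k ≥ 1`; in particular `H(u k) → 0`. -/
theorem bregman_iteration_convergence_rate {n : ℕ}
    (J H : EuclideanSpace ℝ (Fin n) → ℝ)
    (hJ : ConvexOn ℝ Set.univ J) (hH : ConvexOn ℝ Set.univ H)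
    (hHnonneg : ∀ u, 0 ≤ H u) (hHdiff : Differentiable ℝ H)
    (lam : ℝ) (hlam : 0 < lam)
    (u p : ℕ → EuclideanSpace ℝ (Fin n))
    (hsub : ∀ k x, J x - J (u k) ≥ ⟪p k, x - u k⟫)
    (hmin : ∀ k x, bregman J (p k) (u (k + 1)) (u k) + lam * H (u (k + 1)) ≤
      bregman J (p k) x (u k) + lam * H x)
    (hupd : ∀ k, p (k + 1) = p k - lam • gradient H (u (k + 1)))
    (utilde : EuclideanSpace ℝ (Fin n)) (hutilde : H utilde = 0) :
    (∀ k : ℕ, 1 ≤ k →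
      0 ≤ H (u k) ∧ H (u k) ≤ bregman J (p 0) utilde (u 0) / (lam * k)) ∧
      Filter.Tendsto (fun k => H (u k)) Filter.atTop (nhds 0) := by
  set D : ℕ → ℝ := fun k => bregman J (p k) utilde (u k) with hD
  -- nonnegativity of Bregman distances at iterates
  have hbreg_nonneg : ∀ k x, 0 ≤ bregman J (p k) x (u k) := by
    intro k x
    have := hsub k x
    simp only [bregman]
    linarith
  -- monotonicity of H along iterates
  have hmono : ∀ k, H (u (k + 1)) ≤ H (u k) := by
    intro k
    have h1 := hmin k (u k)
    have h2 : bregman J (p k) (u k) (u k) = 0 := by simp [bregman]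
    have h3 := hbreg_nonneg k (u (k + 1))
    rw [h2] at h1
    nlinarith
  -- key decrease estimate
  have hkey : ∀ k, D (k + 1) + lam * H (u (k + 1)) ≤ D k := by
    intro k
    have hgi := convex_grad_ineq H hH hHdiff utilde (u (k + 1))
    have hm := hmin k utilde
    have h3 := hbreg_nonneg k (u (k + 1))
    have hexp : D (k + 1) = J utilde - J (u (k + 1)) - ⟪p k, utilde - u (k + 1)⟫
        + lam * ⟪gradient H (u (k + 1)), utilde - u (k + 1)⟫ := by
      simp only [hD, bregman, hupd k, inner_sub_left, inner_smul_left,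
        RCLike.star_def, conj_trivial]
      ring
    have hsplit : J utilde - J (u (k + 1)) - ⟪p k, utilde - u (k + 1)⟫
        = bregman J (p k) utilde (u k) - bregman J (p k) (u (k + 1)) (u k) := by
      simp only [bregman, inner_sub_right]
      ring
    rw [hutilde] at hm hgi
    have hD' : D k = bregman J (p k) utilde (u k) := rfl
    nlinarith [mul_le_mul_of_nonneg_left hgi hlam.le]
  have hDnonneg : ∀ k, 0 ≤ D k := fun k => hbreg_nonneg k utilde
  -- main estimate by induction: lam * k * H (u k) + D k ≤ D 0
  have hmain : ∀ k : ℕ, lam * k * H (u k) + D k ≤ D 0 := by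
    intro k
    induction k with
    | zero => simp
    | succ k ih =>
      have h1 := hkey k
      have h2 := hmono k
      have h3 := hHnonneg (u (k + 1))
      have : lam * (k + 1 : ℕ) * H (u (k + 1))
          = lam * k * H (u (k + 1)) + lam * H (u (k + 1)) := by
        push_cast; ring
      rw [this]
      have h4 : lam * k * H (u (k + 1)) ≤ lam * k * H (u k) := by
        apply mul_le_mul_of_nonneg_left h2
        positivity
      linarith
  have hbound : ∀ k : ℕ, 1 ≤ k →
      0 ≤ H (u k) ∧ H (u k) ≤ bregman J (p 0) utilde (u 0) / (lam * k) := by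
    intro k hk
    refine ⟨hHnonneg _, ?_⟩
    have hkpos : (0 : ℝ) < lam * k := by
      have : (1 : ℝ) ≤ (k : ℝ) := by exact_mod_cast hk
      positivity
    rw [le_div_iff₀ hkpos]
    have := hmain k
    have := hDnonneg k
    have hD0 : D 0 = bregman J (p 0) utilde (u 0) := rfl
    nlinarith
  refine ⟨hbound, ?_⟩
  -- squeeze
  have htend : Filter.Tendsto (fun k : ℕ => (bregman J (p 0) utilde (u 0) / lam) / k)
      Filter.atTop (nhds 0) := tendsto_const_div_atTop_nhds_zero_nat _
  apply squeeze_zero' (Filter.Eventually.of_forall fun k => hHnonneg (u k))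
  · filter_upwards [Filter.eventually_ge_atTop 1] with k hk
    have := (hbound k hk).2
    calc H (u k) ≤ bregman J (p 0) utilde (u 0) / (lam * k) := this
      _ = (bregman J (p 0) utilde (u 0) / lam) / k := by rw [div_div]
  · exact htend
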